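/- arXiv:2105.07974 — 7 statements merged into one kernel-verified Lean document; each statement's English description precedes it below -/
import Mathlib

section
/- For all integers n ≥ 1 and 0 ≤ k ≤ n-1, the following identity of rational numbers holds: (1/(k+2))·C(n, k+1)·C(n+k+1, k+1) = (1/(k+2))·C(n-1, k+1)·C(n+k+2, k+1) + (1/(k+1))·C(n-1, k)·C(n+k+1, k), where C(a,b) denotes the binomial coefficient (taken to be 0 when b > a or b < 0). -/
open Nat in
/-- For `n ≥ 1` and `0 ≤ k ≤ n - 1`:
`(1/(k+2))·C(n,k+1)·C(n+k+1,k+1)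
  = (1/(k+2))·C(n-1,k+1)·C(n+k+2,k+1) + (1/(k+1))·C(n-1,k)·C(n+k+1,k)`. -/
theorem positive_A_face_identity (n k : ℕ) (hn : 1 ≤ n) (hk : k ≤ n - 1) :
    (1 / ((k : ℚ) + 2)) * (n.choose (k + 1) : ℚ) * ((n + k + 1).choose (k + 1) : ℚ) =
      (1 / ((k : ℚ) + 2)) * ((n - 1).choose (k + 1) : ℚ) * ((n + k + 2).choose (k + 1) : ℚ) +
      (1 / ((k : ℚ) + 1)) * ((n - 1).choose k : ℚ) * ((n + k + 1).choose k : ℚ) := by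
  obtain ⟨m, rfl⟩ : ∃ m, n = m + 1 := ⟨n - 1, by omega⟩
  simp only [Nat.add_sub_cancel]
  rcases eq_or_lt_of_le (show k ≤ m by omega) with rfl | hlt
  · -- k = m
    have h0 : k.choose (k+1) = 0 := Nat.choose_eq_zero_of_lt (by omega)
    have h1 : (k+1).choose (k+1) = 1 := Nat.choose_self _
    have h2 : k.choose k = 1 := Nat.choose_self _
    have key := Nat.choose_succ_right_eq (k+1+k+1) k
    have hs : k+1+k+1 - k = k+2 := by omega
    rw [hs] at key
    have keyq : ((k+1+k+1).choose (k+1) : ℚ) * (k+1) = ((k+1+k+1).choose k : ℚ) * (k+2) := by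
      exact_mod_cast key
    rw [h0, h1, h2]
    push_cast
    have hk1 : (k:ℚ) + 1 ≠ 0 := by positivity
    have hk2 : (k:ℚ) + 2 ≠ 0 := by positivity
    field_simp
    linarith [keyq]
  · obtain ⟨j, rfl⟩ : ∃ j, m = k + 1 + j := ⟨m - k - 1, by omega⟩
    have c1 : (((k+1+j+1).choose (k+1) : ℕ) : ℚ)
        = (((k+j+2) * (k+j+1)! : ℕ) : ℚ) / ((((k+1) * k ! : ℕ) : ℚ) * (((j+1) * j ! : ℕ) : ℚ)) := by
      rw [Nat.cast_choose ℚ (show k+1 ≤ k+1+j+1 by omega),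
        show k+1+j+1 - (k+1) = j+1 by omega,
        show k+1+j+1 = (k+j+1)+1 by omega,
        Nat.factorial_succ (k+j+1), Nat.factorial_succ k, Nat.factorial_succ j]
    have c2 : (((k+1+j+1+k+1).choose (k+1) : ℕ) : ℚ)
        = (((2*k+j+3)! : ℕ) : ℚ) / ((((k+1) * k ! : ℕ) : ℚ) * (((k+j+2) * (k+j+1)! : ℕ) : ℚ)) := by
      rw [Nat.cast_choose ℚ (show k+1 ≤ k+1+j+1+k+1 by omega),
        show k+1+j+1+k+1 - (k+1) = (k+j+1)+1 by omega,
        show k+1+j+1+k+1 = 2*k+j+3 by omega,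
        Nat.factorial_succ (k+j+1), Nat.factorial_succ k]
    have c3 : (((k+1+j).choose (k+1) : ℕ) : ℚ)
        = (((k+j+1)! : ℕ) : ℚ) / ((((k+1) * k ! : ℕ) : ℚ) * ((j ! : ℕ) : ℚ)) := by
      rw [Nat.cast_choose ℚ (show k+1 ≤ k+1+j by omega),
        show k+1+j - (k+1) = j by omega,
        show k+1+j = k+j+1 by omega, Nat.factorial_succ k]
    have c4 : (((k+1+j+1+k+2).choose (k+1) : ℕ) : ℚ)
        = (((2*k+j+4) * (2*k+j+3)! : ℕ) : ℚ)
          / ((((k+1) * k ! : ℕ) : ℚ) * (((k+j+3) * ((k+j+2) * (k+j+1)!) : ℕ) : ℚ)) := by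
      rw [Nat.cast_choose ℚ (show k+1 ≤ k+1+j+1+k+2 by omega),
        show k+1+j+1+k+2 - (k+1) = ((k+j+2)+1) by omega,
        show k+1+j+1+k+2 = (2*k+j+3)+1 by omega,
        Nat.factorial_succ (2*k+j+3), Nat.factorial_succ (k+j+2),
        show k+j+2 = (k+j+1)+1 by omega, Nat.factorial_succ (k+j+1), Nat.factorial_succ k]
    have c5 : (((k+1+j).choose k : ℕ) : ℚ)
        = (((k+j+1)! : ℕ) : ℚ) / (((k ! : ℕ) : ℚ) * (((j+1) * j ! : ℕ) : ℚ)) := by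
      rw [Nat.cast_choose ℚ (show k ≤ k+1+j by omega),
        show k+1+j - k = j+1 by omega,
        show k+1+j = k+j+1 by omega, Nat.factorial_succ j]
    have c6 : (((k+1+j+1+k+1).choose k : ℕ) : ℚ)
        = (((2*k+j+3)! : ℕ) : ℚ)
          / (((k ! : ℕ) : ℚ) * (((k+j+3) * ((k+j+2) * (k+j+1)!) : ℕ) : ℚ)) := by
      rw [Nat.cast_choose ℚ (show k ≤ k+1+j+1+k+1 by omega),
        show k+1+j+1+k+1 - k = (k+j+2)+1 by omega,
        show k+1+j+1+k+1 = 2*k+j+3 by omega,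
        Nat.factorial_succ (k+j+2), show k+j+2 = (k+j+1)+1 by omega,
        Nat.factorial_succ (k+j+1)]
    rw [c1, c2, c3, c4, c5, c6]
    have ha : ((k ! : ℕ) : ℚ) ≠ 0 := by positivity
    have hb : ((j ! : ℕ) : ℚ) ≠ 0 := by positivity
    have hc : (((k+j+1)! : ℕ) : ℚ) ≠ 0 := by positivity
    have hd : (((2*k+j+3)! : ℕ) : ℚ) ≠ 0 := by positivity
    push_cast
    have hk1 : (k:ℚ) + 1 ≠ 0 := by positivity
    have hk2 : (k:ℚ) + 2 ≠ 0 := by positivity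
    have hj1 : (j:ℚ) + 1 ≠ 0 := by positivity
    field_simp
    ring
end

section
/- For all integers n ≥ 2 and 0 ≤ k ≤ n-1, the following identity holds: C(n, k+1)·C(n+k, k+1) = (1/2)·( C(n, k+1)·C(n+k+1, k+1) + C(n-1, k+1)·C(n+k, k+1) ), where C(a,b) denotes the binomial coefficient (equal to 0 if b > a). -/
/-- For `n ≥ 2` and `0 ≤ k ≤ n - 1`:
`C(n,k+1)·C(n+k,k+1) = (1/2)·(C(n,k+1)·C(n+k+1,k+1) + C(n-1,k+1)·C(n+k,k+1))`. -/
theorem positive_B_face_identity (n k : ℕ) (hn : 2 ≤ n) (hk : k ≤ n - 1) :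
    (n.choose (k + 1) : ℚ) * ((n + k).choose (k + 1) : ℚ) =
      (1 / 2 : ℚ) * ((n.choose (k + 1) : ℚ) * ((n + k + 1).choose (k + 1) : ℚ) +
        ((n - 1).choose (k + 1) : ℚ) * ((n + k).choose (k + 1) : ℚ)) := by
  have hkn : k + 1 ≤ n := by omega
  have h1 : (n + k).choose (k + 1) * (n + k + 1) = (n + k + 1).choose (k + 1) * n := by
    have h := Nat.choose_mul_succ_eq (n + k) (k + 1)
    rw [show n + k + 1 - (k + 1) = n from by omega] at h
    exact h
  have h2 : (n - 1).choose (k + 1) * n = n.choose (k + 1) * (n - (k + 1)) := by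
    have h := Nat.choose_mul_succ_eq (n - 1) (k + 1)
    rw [show n - 1 + 1 = n from by omega] at h
    exact h
  have hq : (n : ℚ) ≠ 0 := by positivity
  have h1' : ((n + k).choose (k + 1) : ℚ) * (n + k + 1) =
      ((n + k + 1).choose (k + 1) : ℚ) * n := by exact_mod_cast h1
  have h2' : ((n - 1).choose (k + 1) : ℚ) * n =
      (n.choose (k + 1) : ℚ) * ((n : ℚ) - (k + 1)) := by
    have := congrArg (Nat.cast : ℕ → ℚ) h2
    push_cast [hkn] at this
    linarith [this]
  linear_combination (norm := (field_simp; ring)) ((n.choose (k + 1) : ℚ) / (2 * n)) * h1' - (((n + k).choose (k + 1) : ℚ) / (2 * n)) * h2'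
end

section
/- For every integer n ≥ 1, the alternating sum ∑_{k=0}^{n-1} (-1)^k · (1/(k+2))·C(n,k+1)·C(n+k+3,k+1) equals 1 + (-1)^{n-1}. -/
/-- Finite-difference identity: `∑_{j=0}^m (-1)^j C(m,j) C(x+j,q) = (-1)^m C(x, q-m)` for `m ≤ q`. -/
lemma alt_sum_choose : ∀ (m q x : ℕ), m ≤ q →
    ∑ j ∈ Finset.range (m + 1), (-1 : ℚ) ^ j * (m.choose j : ℚ) * ((x + j).choose q : ℚ) =
      (-1 : ℚ) ^ m * (x.choose (q - m) : ℚ) := by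
  intro m
  induction m with
  | zero => intro q x _; simp
  | succ m ih =>
    intro q x h
    have h1 : m ≤ q := Nat.le_of_succ_le h
    have hq : q - m = (q - (m + 1)) + 1 := by omega
    -- auxiliary: shifted sum
    have hB : ∑ j ∈ Finset.range (m + 1),
        (-1 : ℚ) ^ (j+1) * (m.choose (j+1) : ℚ) * ((x + (j+1)).choose q : ℚ)
        = (-1 : ℚ) ^ m * (x.choose (q - m) : ℚ) - (x.choose q : ℚ) := by
      have e1 : ∑ j ∈ Finset.range (m + 2),
          (-1 : ℚ) ^ j * (m.choose j : ℚ) * ((x + j).choose q : ℚ)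
          = (∑ j ∈ Finset.range (m + 1),
              (-1 : ℚ) ^ (j+1) * (m.choose (j+1) : ℚ) * ((x + (j+1)).choose q : ℚ))
            + (x.choose q : ℚ) := by
        rw [Finset.sum_range_succ']
        simp
      have e2 : ∑ j ∈ Finset.range (m + 2),
          (-1 : ℚ) ^ j * (m.choose j : ℚ) * ((x + j).choose q : ℚ)
          = (-1 : ℚ) ^ m * (x.choose (q - m) : ℚ) := by
        rw [Finset.sum_range_succ, Nat.choose_succ_self]
        simpa using ih q x h1
      linarith [e1, e2]
    rw [Finset.sum_range_succ']
    have split : ∑ j ∈ Finset.range (m + 1),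
        (-1 : ℚ) ^ (j+1) * ((m+1).choose (j+1) : ℚ) * ((x + (j+1)).choose q : ℚ)
        = (∑ j ∈ Finset.range (m + 1),
            (-1 : ℚ) ^ (j+1) * (m.choose j : ℚ) * (((x+1) + j).choose q : ℚ))
          + ∑ j ∈ Finset.range (m + 1),
            (-1 : ℚ) ^ (j+1) * (m.choose (j+1) : ℚ) * ((x + (j+1)).choose q : ℚ) := by
      rw [← Finset.sum_add_distrib]
      refine Finset.sum_congr rfl fun j _ => ?_
      have : ((m+1).choose (j+1) : ℚ) = (m.choose j : ℚ) + (m.choose (j+1) : ℚ) := by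
        rw [Nat.choose_succ_succ]; push_cast; ring
      have hx : x + (j + 1) = (x + 1) + j := by ring
      rw [this, hx]; ring
    have first : ∑ j ∈ Finset.range (m + 1),
        (-1 : ℚ) ^ (j+1) * (m.choose j : ℚ) * (((x+1) + j).choose q : ℚ)
        = -((-1 : ℚ) ^ m * ((x+1).choose (q - m) : ℚ)) := by
      have := ih q (x+1) h1
      calc ∑ j ∈ Finset.range (m + 1),
            (-1 : ℚ) ^ (j+1) * (m.choose j : ℚ) * (((x+1) + j).choose q : ℚ)
          = -∑ j ∈ Finset.range (m + 1),
            (-1 : ℚ) ^ j * (m.choose j : ℚ) * (((x+1) + j).choose q : ℚ) := by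
            rw [← Finset.sum_neg_distrib]
            exact Finset.sum_congr rfl fun j _ => by ring
        _ = -((-1 : ℚ) ^ m * ((x+1).choose (q - m) : ℚ)) := by rw [this]
    have pascal : ((x+1).choose (q - m) : ℚ)
        = (x.choose (q - (m+1)) : ℚ) + (x.choose (q - m) : ℚ) := by
      rw [hq, Nat.choose_succ_succ]
      push_cast; ring
    rw [split, first, hB]
    simp only [pow_zero, Nat.choose_zero_right, Nat.cast_one, Nat.add_zero, one_mul, add_zero]
    rw [pascal]
    ring_nf

/-- The alternating sum of the face numbers of the cluster complex of type `A_n`: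
`∑_{k=0}^{n-1} (-1)^k (1/(k+2))·C(n,k+1)·C(n+k+3,k+1) = 1 + (-1)^{n-1}`. -/
theorem euler_char_A (n : ℕ) (hn : 1 ≤ n) :
    ∑ k ∈ Finset.range n,
        (-1 : ℚ) ^ k * (1 / ((k : ℚ) + 2)) * (n.choose (k + 1) : ℚ) *
          ((n + k + 3).choose (k + 1) : ℚ) =
      1 + (-1 : ℚ) ^ (n - 1) := by
  have hn1 : ((n : ℚ) + 1) ≠ 0 := by positivity
  -- termwise rewrite
  have step1 : ∀ k ∈ Finset.range n,
      (-1 : ℚ) ^ k * (1 / ((k : ℚ) + 2)) * (n.choose (k + 1) : ℚ) *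
          ((n + k + 3).choose (k + 1) : ℚ)
        = (1 / ((n : ℚ) + 1)) *
            ((-1 : ℚ) ^ k * ((n+1).choose (k+2) : ℚ) * (((n+1) + (k+2)).choose (n+2) : ℚ)) := by
    intro k _
    have hk2 : ((k : ℚ) + 2) ≠ 0 := by positivity
    have hmul : ((n : ℚ) + 1) * (n.choose (k+1) : ℚ)
        = ((n+1).choose (k+2) : ℚ) * ((k : ℚ) + 2) := by
      have := Nat.add_one_mul_choose_eq n (k+1)
      have : (n+1) * (n.choose (k+1)) = ((n+1).choose (k+2)) * (k+2) := this
      exact_mod_cast this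
    have hsymm : ((n + k + 3).choose (k + 1) : ℚ) = (((n+1) + (k+2)).choose (n+2) : ℚ) := by
      have h1 : (n+1) + (k+2) = n + k + 3 := by omega
      have h2 : (n + k + 3).choose (n + 2) = (n + k + 3).choose (k + 1) := by
        have : n + 2 = (n + k + 3) - (k + 1) := by omega
        rw [this, Nat.choose_symm (by omega)]
      rw [h1, h2]
    have hdiv : (n.choose (k+1) : ℚ) / ((k:ℚ)+2) = ((n+1).choose (k+2) : ℚ) / ((n:ℚ)+1) := by
      rw [div_eq_div_iff hk2 hn1]; linarith [hmul]
    rw [hsymm, show (-1:ℚ)^k * (1/((k:ℚ)+2)) * (n.choose (k+1) : ℚ) *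
        (((n+1) + (k+2)).choose (n+2) : ℚ)
      = (-1:ℚ)^k * ((n.choose (k+1) : ℚ) / ((k:ℚ)+2)) *
        (((n+1) + (k+2)).choose (n+2) : ℚ) from by ring, hdiv]
    ring
  rw [Finset.sum_congr rfl step1, ← Finset.mul_sum]
  -- the key alternating sum
  have key := alt_sum_choose (n+1) (n+2) (n+1) (by omega)
  have hdec : ∑ j ∈ Finset.range (n + 2),
      (-1 : ℚ) ^ j * ((n+1).choose j : ℚ) * (((n+1) + j).choose (n+2) : ℚ)
      = (∑ k ∈ Finset.range n,
          (-1 : ℚ) ^ k * ((n+1).choose (k+2) : ℚ) * (((n+1) + (k+2)).choose (n+2) : ℚ))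
        - ((n : ℚ) + 1) := by
    rw [Finset.sum_range_succ']
    have : ∑ j ∈ Finset.range (n + 1),
        (-1 : ℚ) ^ (j+1) * ((n+1).choose (j+1) : ℚ) * (((n+1) + (j+1)).choose (n+2) : ℚ)
        = (∑ k ∈ Finset.range n,
            (-1 : ℚ) ^ (k+2) * ((n+1).choose (k+2) : ℚ) * (((n+1) + (k+2)).choose (n+2) : ℚ))
          + (-1 : ℚ) ^ 1 * ((n+1).choose 1 : ℚ) * (((n+1) + 1).choose (n+2) : ℚ) := by
      rw [Finset.sum_range_succ']
    rw [this]
    have e0 : (((n:ℕ)+1).choose (n+2) : ℚ) = 0 := by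
      norm_cast
      exact Nat.choose_eq_zero_of_lt (by omega)
    have e1 : (((n:ℕ)+1+1).choose (n+2) : ℚ) = 1 := by
      norm_cast
      have : n + 1 + 1 = n + 2 := by omega
      rw [this, Nat.choose_self]
    have hc : ∑ k ∈ Finset.range n,
        (-1 : ℚ) ^ (k+2) * ((n+1).choose (k+2) : ℚ) * (((n+1) + (k+2)).choose (n+2) : ℚ)
        = ∑ k ∈ Finset.range n,
        (-1 : ℚ) ^ k * ((n+1).choose (k+2) : ℚ) * (((n+1) + (k+2)).choose (n+2) : ℚ) :=
      Finset.sum_congr rfl fun k _ => by ring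
    rw [hc]
    simp [e0, e1]
    ring
  have hqm : (n + 2) - (n + 1) = 1 := by omega
  rw [hqm, Nat.choose_one_right] at key
  rw [hdec] at key
  -- key : sum - (n+1) = (-1)^{n+1} * (n+1)
  have hsum : ∑ k ∈ Finset.range n,
      (-1 : ℚ) ^ k * ((n+1).choose (k+2) : ℚ) * (((n+1) + (k+2)).choose (n+2) : ℚ)
      = (-1 : ℚ) ^ (n+1) * ((n : ℚ) + 1) + ((n : ℚ) + 1) := by
    push_cast at key ⊢
    linarith
  rw [hsum]
  have hpow : (-1 : ℚ) ^ (n+1) = (-1 : ℚ) ^ (n-1) := by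
    obtain ⟨m, rfl⟩ := Nat.exists_eq_add_of_le hn
    have : 1 + m + 1 = (1 + m - 1) + 2 := by omega
    rw [this, pow_add]
    norm_num
  rw [hpow]
  field_simp
  ring
end

section
/- For every integer n ≥ 1, the alternating sum ∑_{k=0}^{n-1} (-1)^k · C(n,k+1)·C(n+k+1,k+1) equals 1 + (-1)^{n-1}. -/
open Finset

private lemma alt_choose_rat (m : ℕ) :
    ∑ t ∈ Finset.range (m + 1), (-1 : ℚ) ^ t * (m.choose t : ℚ) =
      if m = 0 then 1 else 0 := by
  by_cases hm : m = 0
  · subst hm; simp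
  · rw [if_neg hm]
    have h := Int.alternating_sum_range_choose_of_ne hm
    exact_mod_cast h

private lemma innerSumB (n i : ℕ) (hi : i ≤ n) :
    ∑ j ∈ Finset.range (n + 1), (-1 : ℚ) ^ j * (n.choose j : ℚ) * (j.choose i : ℚ) =
      if i = n then (-1 : ℚ) ^ n else 0 := by
  have hsub : Finset.Ico i (n + 1) ⊆ Finset.range (n + 1) := by
    intro x hx
    simp only [Finset.mem_Ico] at hx
    simpa using hx.2
  have hzero : ∀ x ∈ Finset.range (n + 1), x ∉ Finset.Ico i (n + 1) →
      (-1 : ℚ) ^ x * (n.choose x : ℚ) * (x.choose i : ℚ) = 0 := by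
    intro x hx hx'
    simp only [Finset.mem_range] at hx
    simp only [Finset.mem_Ico, not_and, not_lt] at hx'
    have hxi : x < i := by by_contra h; exact absurd hx (not_lt.mpr (hx' (not_lt.mp h)))
    rw [Nat.choose_eq_zero_of_lt hxi]
    simp
  rw [← Finset.sum_subset hsub hzero, Finset.sum_Ico_eq_sum_range]
  have hrw : ∀ t ∈ Finset.range (n + 1 - i),
      (-1 : ℚ) ^ (i + t) * (n.choose (i + t) : ℚ) * ((i + t).choose i : ℚ) =
        ((-1 : ℚ) ^ i * (n.choose i : ℚ)) * ((-1 : ℚ) ^ t * ((n - i).choose t : ℚ)) := by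
    intro t ht
    simp only [Finset.mem_range] at ht
    have hle : i + t ≤ n := by omega
    have := Nat.choose_mul (n := n) (Nat.le_add_right i t)
    have hcast : (n.choose (i + t) : ℚ) * ((i + t).choose i : ℚ) =
        (n.choose i : ℚ) * ((n - i).choose (i + t - i) : ℚ) := by exact_mod_cast this
    rw [pow_add]
    have : i + t - i = t := by omega
    rw [this] at hcast
    linear_combination ((-1 : ℚ) ^ i * (-1 : ℚ) ^ t) * hcast
  rw [Finset.sum_congr rfl hrw, ← Finset.mul_sum]
  have hni : n + 1 - i = (n - i) + 1 := by omega
  rw [hni, alt_choose_rat (n - i)]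
  by_cases h : i = n
  · subst h; simp
  · have : n - i ≠ 0 := by omega
    rw [if_neg this, if_neg h, mul_zero]

private lemma vander_rat (n j : ℕ) :
    ((n + j).choose j : ℚ) =
      ∑ i ∈ Finset.range (n + 1), (n.choose i : ℚ) * (j.choose i : ℚ) := by
  have h := Nat.add_choose_eq n j j
  rw [Finset.Nat.sum_antidiagonal_eq_sum_range_succ_mk] at h
  have h2 : (n + j).choose j = ∑ i ∈ Finset.range (j + 1), n.choose i * j.choose i := by
    rw [h]
    refine Finset.sum_congr rfl fun i hi => ?_
    simp only [Finset.mem_range] at hi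
    rw [Nat.choose_symm (by omega)]
  -- extend both sums to range (n + j + 1)
  have key : ∀ (a b : ℕ), a ≤ b →
      (∀ x, a ≤ x → (n.choose x : ℚ) * (j.choose x : ℚ) = 0) →
      ∑ i ∈ Finset.range b, (n.choose i : ℚ) * (j.choose i : ℚ) =
        ∑ i ∈ Finset.range a, (n.choose i : ℚ) * (j.choose i : ℚ) := by
    intro a b hab hz
    symm
    apply Finset.sum_subset (Finset.range_subset_range.mpr hab)
    intro x _ hx
    simp only [Finset.mem_range, not_lt] at hx
    exact hz x hx
  have e1 : ∑ i ∈ Finset.range (n + j + 2), (n.choose i : ℚ) * (j.choose i : ℚ) =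
      ∑ i ∈ Finset.range (j + 1), (n.choose i : ℚ) * (j.choose i : ℚ) := by
    apply key _ _ (by omega)
    intro x hx
    rw [Nat.choose_eq_zero_of_lt (show j < x by omega)]
    simp
  have e2 : ∑ i ∈ Finset.range (n + j + 2), (n.choose i : ℚ) * (j.choose i : ℚ) =
      ∑ i ∈ Finset.range (n + 1), (n.choose i : ℚ) * (j.choose i : ℚ) := by
    apply key _ _ (by omega)
    intro x hx
    rw [Nat.choose_eq_zero_of_lt (show n < x by omega)]
    simp
  rw [← e2, e1]
  exact_mod_cast h2

private lemma F_eq (n : ℕ) :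
    ∑ j ∈ Finset.range (n + 1),
        (-1 : ℚ) ^ j * (n.choose j : ℚ) * ((n + j).choose j : ℚ) = (-1 : ℚ) ^ n := by
  have hstep : ∀ j ∈ Finset.range (n + 1),
      (-1 : ℚ) ^ j * (n.choose j : ℚ) * ((n + j).choose j : ℚ) =
        ∑ i ∈ Finset.range (n + 1),
          (n.choose i : ℚ) * ((-1 : ℚ) ^ j * (n.choose j : ℚ) * (j.choose i : ℚ)) := by
    intro j _
    rw [vander_rat n j, Finset.mul_sum]
    refine Finset.sum_congr rfl fun i _ => by ring
  rw [Finset.sum_congr rfl hstep, Finset.sum_comm]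
  have : ∀ i ∈ Finset.range (n + 1),
      ∑ j ∈ Finset.range (n + 1),
        (n.choose i : ℚ) * ((-1 : ℚ) ^ j * (n.choose j : ℚ) * (j.choose i : ℚ)) =
        (n.choose i : ℚ) * (if i = n then (-1 : ℚ) ^ n else 0) := by
    intro i hi
    simp only [Finset.mem_range] at hi
    rw [← Finset.mul_sum, innerSumB n i (by omega)]
  rw [Finset.sum_congr rfl this]
  rw [Finset.sum_eq_single_of_mem n (Finset.self_mem_range_succ n)]
  · simp
  · intro b _ hb
    rw [if_neg hb, mul_zero]

/-- The alternating sum of the face numbers of the cluster complex of type `B_n`: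
`∑_{k=0}^{n-1} (-1)^k C(n,k+1)·C(n+k+1,k+1) = 1 + (-1)^{n-1}`. -/
theorem euler_char_B (n : ℕ) (hn : 1 ≤ n) :
    ∑ k ∈ Finset.range n,
        (-1 : ℚ) ^ k * (n.choose (k + 1) : ℚ) * ((n + k + 1).choose (k + 1) : ℚ) =
      1 + (-1 : ℚ) ^ (n - 1) := by
  have hF := F_eq n
  rw [Finset.sum_range_succ'] at hF
  simp only [Nat.choose_zero_right, pow_zero] at hF
  have h1 : ∑ k ∈ Finset.range n,
      (-1 : ℚ) ^ (k + 1) * (n.choose (k + 1) : ℚ) * ((n + (k + 1)).choose (k + 1) : ℚ) =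
      (-1 : ℚ) ^ n - 1 := by
    push_cast at hF
    linarith [hF]
  have h2 : ∑ k ∈ Finset.range n,
      (-1 : ℚ) ^ k * (n.choose (k + 1) : ℚ) * ((n + k + 1).choose (k + 1) : ℚ) =
      -∑ k ∈ Finset.range n,
        (-1 : ℚ) ^ (k + 1) * (n.choose (k + 1) : ℚ) * ((n + (k + 1)).choose (k + 1) : ℚ) := by
    rw [← Finset.sum_neg_distrib]
    refine Finset.sum_congr rfl fun k _ => ?_
    have : n + k + 1 = n + (k + 1) := by omega
    rw [this, pow_succ]
    ring
  rw [h2, h1]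
  obtain ⟨m, rfl⟩ : ∃ m, n = m + 1 := ⟨n - 1, by omega⟩
  simp [pow_succ]
end

section
/- For every integer n ≥ 2, the alternating sum ∑_{k=0}^{n-1} (-1)^k · C(n,k+1)·( C(n+k+1,k+1) − C(n+k-1,k) ) equals 1 + (-1)^{n-1}. -/
open Finset

private lemma alt_sum_q (N : ℕ) :
    ∑ m ∈ range (N + 1), (-1 : ℚ) ^ m * (N.choose m : ℚ) = if N = 0 then 1 else 0 := by
  have h := @Int.alternating_sum_range_choose N
  have h2 := congrArg (fun z : ℤ => (z : ℚ)) h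
  simp only [Int.cast_sum, Int.cast_mul, Int.cast_pow, Int.cast_neg, Int.cast_one,
    Int.cast_natCast] at h2
  rw [h2]
  split <;> simp

private lemma delta_sum (n i : ℕ) (h : i ≤ n) :
    ∑ j ∈ range (n + 1), (-1 : ℚ) ^ j * (n.choose j : ℚ) * (j.choose i : ℚ)
      = if i = n then (-1 : ℚ) ^ n else 0 := by
  have h1 : ∑ j ∈ range (n + 1), (-1 : ℚ) ^ j * (n.choose j : ℚ) * (j.choose i : ℚ)
      = ∑ j ∈ Ico i (n + 1), (-1 : ℚ) ^ j * (n.choose j : ℚ) * (j.choose i : ℚ) := by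
    rw [range_eq_Ico]
    refine (sum_subset (Ico_subset_Ico (Nat.zero_le _) le_rfl) ?_).symm
    intro x hx hnx
    have hxi : x < i := by
      simp only [mem_Ico] at hx hnx
      omega
    rw [Nat.choose_eq_zero_of_lt hxi]
    simp
  rw [h1, sum_Ico_eq_sum_range]
  have hni : n + 1 - i = (n - i) + 1 := by omega
  rw [hni]
  have h2 : ∀ j ∈ range ((n - i) + 1),
      (-1 : ℚ) ^ (i + j) * (n.choose (i + j) : ℚ) * ((i + j).choose i : ℚ)
        = ((-1 : ℚ) ^ i * (n.choose i : ℚ)) * ((-1 : ℚ) ^ j * ((n - i).choose j : ℚ)) := by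
    intro j hj
    have hjle : j ≤ n - i := by simpa [Nat.lt_succ_iff] using hj
    have hkn : i + j ≤ n := by omega
    have hsk : i ≤ i + j := Nat.le_add_right _ _
    have := Nat.choose_mul (n := n) hsk
    rw [Nat.add_sub_cancel_left] at this
    have hcast : (n.choose (i + j) : ℚ) * ((i + j).choose i : ℚ)
        = (n.choose i : ℚ) * ((n - i).choose j : ℚ) := by exact_mod_cast congrArg (Nat.cast : ℕ → ℚ) this
    rw [mul_assoc, hcast, pow_add]
    ring
  rw [sum_congr rfl h2, ← mul_sum, alt_sum_q (n - i)]
  by_cases hc : i = n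
  · subst hc
    simp
  · have : n - i ≠ 0 := by omega
    simp [this, hc]

private lemma innerAltSum (n m : ℕ) (hm : m ≤ n) :
    ∑ k ∈ range n, (-1 : ℚ) ^ k * (n.choose (k + 1) : ℚ) * ((k + 1).choose m : ℚ)
      = (if m = 0 then (1 : ℚ) else 0) - (if m = n then (-1 : ℚ) ^ n else 0) := by
  have hd := delta_sum n m hm
  rw [Finset.sum_range_succ'] at hd
  have h0 : (-1 : ℚ) ^ 0 * (n.choose 0 : ℚ) * ((0 : ℕ).choose m : ℚ)
      = if m = 0 then (1 : ℚ) else 0 := by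
    rcases Nat.eq_zero_or_pos m with hm0 | hm0
    · subst hm0; simp
    · have hm' : m ≠ 0 := by omega
      rw [Nat.choose_eq_zero_of_lt hm0]
      simp [hm']
  rw [h0] at hd
  have h1 : ∀ k, (-1 : ℚ) ^ (k + 1) * (n.choose (k + 1) : ℚ) * ((k + 1).choose m : ℚ)
      = -((-1 : ℚ) ^ k * (n.choose (k + 1) : ℚ) * ((k + 1).choose m : ℚ)) := by
    intro k; ring
  simp only [h1] at hd
  rw [Finset.sum_neg_distrib] at hd
  linarith [hd]

private lemma vdm1 (n k : ℕ) :
    ((n + k + 1).choose (k + 1) : ℚ)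
      = ∑ i ∈ range (k + 2), (n.choose i : ℚ) * ((k + 1).choose i : ℚ) := by
  have h : (n + (k + 1)).choose (k + 1)
      = ∑ i ∈ range (k + 2), n.choose i * (k + 1).choose (k + 1 - i) := by
    rw [Nat.add_choose_eq]
    rw [Finset.Nat.sum_antidiagonal_eq_sum_range_succ (fun a b => n.choose a * (k+1).choose b)]
  have h2 : ∀ i ∈ range (k + 2), (n.choose i : ℚ) * ((k + 1).choose (k + 1 - i) : ℚ)
      = (n.choose i : ℚ) * ((k + 1).choose i : ℚ) := by
    intro i hi
    have : i ≤ k + 1 := by simpa [Nat.lt_succ_iff] using hi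
    rw [Nat.choose_symm this]
  rw [show n + k + 1 = n + (k + 1) by ring, ← sum_congr rfl h2]
  exact_mod_cast congrArg (Nat.cast : ℕ → ℚ) h

private lemma vdm2 (n k : ℕ) (hn : 2 ≤ n) :
    ((n + k - 1).choose k : ℚ)
      = ∑ i ∈ range (k + 1), ((n - 2).choose i : ℚ) * ((k + 1).choose (i + 1) : ℚ) := by
  have heq : n + k - 1 = (n - 2) + (k + 1) := by omega
  have h : ((n - 2) + (k + 1)).choose k
      = ∑ i ∈ range (k + 1), (n - 2).choose i * (k + 1).choose (k - i) := by
    rw [Nat.add_choose_eq]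
    rw [Finset.Nat.sum_antidiagonal_eq_sum_range_succ (fun a b => (n-2).choose a * (k+1).choose b)]
  have h2 : ∀ i ∈ range (k + 1), ((n - 2).choose i : ℚ) * ((k + 1).choose (k - i) : ℚ)
      = ((n - 2).choose i : ℚ) * ((k + 1).choose (i + 1) : ℚ) := by
    intro i hi
    have hik : i ≤ k := by simpa [Nat.lt_succ_iff] using hi
    have : (k + 1).choose (k - i) = (k + 1).choose (i + 1) := by
      have hle : k - i ≤ k + 1 := by omega
      rw [← Nat.choose_symm hle]
      congr 1
      omega
    rw [this]
  rw [heq, ← sum_congr rfl h2]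
  exact_mod_cast congrArg (Nat.cast : ℕ → ℚ) h

/-- The alternating sum of the face numbers of the cluster complex of type `D_n`:
`∑_{k=0}^{n-1} (-1)^k C(n,k+1)·(C(n+k+1,k+1) − C(n+k-1,k)) = 1 + (-1)^{n-1}`, `n ≥ 2`. -/
theorem euler_char_D (n : ℕ) (hn : 2 ≤ n) :
    ∑ k ∈ Finset.range n,
        (-1 : ℚ) ^ k * (n.choose (k + 1) : ℚ) *
          (((n + k + 1).choose (k + 1) : ℚ) - ((n + k - 1).choose k : ℚ)) =
      1 + (-1 : ℚ) ^ (n - 1) := by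
  have hsplit : ∑ k ∈ Finset.range n,
        (-1 : ℚ) ^ k * (n.choose (k + 1) : ℚ) *
          (((n + k + 1).choose (k + 1) : ℚ) - ((n + k - 1).choose k : ℚ))
      = (∑ k ∈ range n, (-1 : ℚ) ^ k * (n.choose (k + 1) : ℚ) * ((n + k + 1).choose (k + 1) : ℚ))
        - ∑ k ∈ range n, (-1 : ℚ) ^ k * (n.choose (k + 1) : ℚ) * ((n + k - 1).choose k : ℚ) := by
    rw [← sum_sub_distrib]
    exact sum_congr rfl fun k _ => by ring
  -- A part
  have hA : ∑ k ∈ range n, (-1 : ℚ) ^ k * (n.choose (k + 1) : ℚ) * ((n + k + 1).choose (k + 1) : ℚ)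
      = 1 - (-1 : ℚ) ^ n := by
    have step1 : ∀ k ∈ range n,
        (-1 : ℚ) ^ k * (n.choose (k + 1) : ℚ) * ((n + k + 1).choose (k + 1) : ℚ)
          = ∑ i ∈ range (n + 1),
              (n.choose i : ℚ) * ((-1 : ℚ) ^ k * (n.choose (k + 1) : ℚ) * ((k + 1).choose i : ℚ)) := by
      intro k hk
      have hkn : k < n := mem_range.mp hk
      rw [vdm1 n k, mul_sum]
      have hext : ∑ i ∈ range (k + 2),
            (-1 : ℚ) ^ k * (n.choose (k + 1) : ℚ) * ((n.choose i : ℚ) * ((k + 1).choose i : ℚ))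
          = ∑ i ∈ range (n + 1),
            (-1 : ℚ) ^ k * (n.choose (k + 1) : ℚ) * ((n.choose i : ℚ) * ((k + 1).choose i : ℚ)) := by
        refine sum_subset (by intro x hx; simp only [mem_range] at *; omega) ?_
        intro x hx hnx
        have : k + 1 < x := by simp only [mem_range] at hx hnx; omega
        rw [Nat.choose_eq_zero_of_lt this]
        simp
      rw [hext]
      exact sum_congr rfl fun i _ => by ring
    rw [sum_congr rfl step1, Finset.sum_comm]
    have step2 : ∀ i ∈ range (n + 1),
        ∑ k ∈ range n, (n.choose i : ℚ) * ((-1 : ℚ) ^ k * (n.choose (k + 1) : ℚ) * ((k + 1).choose i : ℚ))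
          = (n.choose i : ℚ) * ((if i = 0 then (1 : ℚ) else 0) - (if i = n then (-1 : ℚ) ^ n else 0)) := by
      intro i hi
      rw [← mul_sum, innerAltSum n i (by simpa [Nat.lt_succ_iff] using hi)]
    rw [sum_congr rfl step2]
    simp only [mul_sub, sum_sub_distrib, mul_ite, mul_one, mul_zero]
    rw [Finset.sum_ite_eq' (range (n + 1)) 0 (fun i => (n.choose i : ℚ)),
      Finset.sum_ite_eq' (range (n + 1)) n (fun i => (n.choose i : ℚ) * (-1 : ℚ) ^ n)]
    simp [Nat.choose_self]
  -- B part
  have hB : ∑ k ∈ range n, (-1 : ℚ) ^ k * (n.choose (k + 1) : ℚ) * ((n + k - 1).choose k : ℚ)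
      = 0 := by
    have step1 : ∀ k ∈ range n,
        (-1 : ℚ) ^ k * (n.choose (k + 1) : ℚ) * ((n + k - 1).choose k : ℚ)
          = ∑ i ∈ range n,
              ((n - 2).choose i : ℚ) *
                ((-1 : ℚ) ^ k * (n.choose (k + 1) : ℚ) * ((k + 1).choose (i + 1) : ℚ)) := by
      intro k hk
      have hkn : k < n := mem_range.mp hk
      rw [vdm2 n k hn, mul_sum]
      have hext : ∑ i ∈ range (k + 1),
            (-1 : ℚ) ^ k * (n.choose (k + 1) : ℚ) * (((n - 2).choose i : ℚ) * ((k + 1).choose (i + 1) : ℚ))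
          = ∑ i ∈ range n,
            (-1 : ℚ) ^ k * (n.choose (k + 1) : ℚ) * (((n - 2).choose i : ℚ) * ((k + 1).choose (i + 1) : ℚ)) := by
        refine sum_subset (by intro x hx; simp only [mem_range] at *; omega) ?_
        intro x hx hnx
        have : k + 1 < x + 1 := by simp only [mem_range] at hx hnx; omega
        rw [Nat.choose_eq_zero_of_lt this]
        simp
      rw [hext]
      exact sum_congr rfl fun i _ => by ring
    rw [sum_congr rfl step1, Finset.sum_comm]
    have step2 : ∀ i ∈ range n,
        ∑ k ∈ range n, ((n - 2).choose i : ℚ) *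
            ((-1 : ℚ) ^ k * (n.choose (k + 1) : ℚ) * ((k + 1).choose (i + 1) : ℚ))
          = ((n - 2).choose i : ℚ) *
              ((if i + 1 = 0 then (1 : ℚ) else 0) - (if i + 1 = n then (-1 : ℚ) ^ n else 0)) := by
      intro i hi
      rw [← mul_sum, innerAltSum n (i + 1) (by simp only [mem_range] at hi; omega)]
    rw [sum_congr rfl step2]
    have step3 : ∀ i ∈ range n,
        ((n - 2).choose i : ℚ) *
            ((if i + 1 = 0 then (1 : ℚ) else 0) - (if i + 1 = n then (-1 : ℚ) ^ n else 0))
          = 0 := by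
      intro i hi
      by_cases hin : i + 1 = n
      · have : n - 2 < i := by omega
        rw [Nat.choose_eq_zero_of_lt this]
        simp
      · simp [hin]
    rw [sum_congr rfl step3, sum_const_zero]
  rw [hsplit, hA, hB]
  have hpow : (-1 : ℚ) ^ n = (-1 : ℚ) ^ (n - 1) * (-1) := by
    rw [← pow_succ]
    congr 1
    omega
  rw [hpow]
  ring
end

section
/- Let m ≥ 5 and label the vertices of a convex m-gon by ZMod m. Fix a vertex v and let the fan triangulation at v be the set of all diagonals {v, w} with w distinct from v, v-1, v+1. Then {v-1, v+1} is the unique diagonal of the m-gon that crosses every diagonal of the fan triangulation at v. -/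
/-- Two vertices of the `m`-gon (labelled by `ZMod m`) are adjacent if they differ by `±1`. -/
def AdjacentVert {m : ℕ} (a b : ZMod m) : Prop := a - b = 1 ∨ b - a = 1

/-- A diagonal is an (unordered) pair of distinct, non-adjacent vertices. -/
def IsDiagonal {m : ℕ} (a b : ZMod m) : Prop := a ≠ b ∧ ¬ AdjacentVert a b

/-- `x` lies strictly between `a` and `b` on the positively oriented open arc from `a` to `b`. -/
def StrictlyBtw {m : ℕ} (a x b : ZMod m) : Prop :=
  0 < (x - a).val ∧ (x - a).val < (b - a).val

/-- The diagonals `{a, b}` and `{c, d}` cross: exactly one of `c, d` lies strictly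
between `a` and `b` (on one open arc) and the other lies strictly on the other open arc. -/
def Crosses {m : ℕ} (a b c d : ZMod m) : Prop :=
  (StrictlyBtw a c b ∧ StrictlyBtw b d a) ∨ (StrictlyBtw a d b ∧ StrictlyBtw b c a)

namespace FanAux

variable {m : ℕ} [NeZero m]

lemma val_sub' (a b : ZMod m) : (a - b).val = (a.val + (m - b.val)) % m := by
  have hb : b.val ≤ m := le_of_lt (ZMod.val_lt b)
  have h1 : ((m - b.val : ℕ) : ZMod m) = - b := by
    rw [Nat.cast_sub hb]
    simp [ZMod.natCast_val, ZMod.cast_id]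
  have h2 : a - b = a + ((m - b.val : ℕ) : ZMod m) := by rw [h1]; ring
  rw [h2, ZMod.val_add, ZMod.val_natCast, Nat.add_mod_mod]

lemma sub_val_eq (a b : ZMod m) :
    (a - b).val = if b.val ≤ a.val then a.val - b.val else a.val + m - b.val := by
  have ha : a.val < m := ZMod.val_lt a
  have hb : b.val < m := ZMod.val_lt b
  rw [val_sub']
  split
  · rw [show a.val + (m - b.val) = (a.val - b.val) + m by omega, Nat.add_mod_right,
      Nat.mod_eq_of_lt (by omega)]
  · rw [Nat.mod_eq_of_lt (by omega)]
    omega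

lemma val_inj {a b : ZMod m} : a.val = b.val ↔ a = b :=
  ⟨fun h => ZMod.val_injective m h, fun h => by rw [h]⟩

lemma strictlyBtw_rev (v w x : ZMod m) (hw : w ≠ v) :
    StrictlyBtw w x v ↔ (w - v).val < (x - v).val := by
  have hk : 0 < (w - v).val := by
    simpa [ZMod.val_pos, sub_eq_zero] using hw
  have hkm : (w - v).val < m := ZMod.val_lt _
  have hpm : (x - v).val < m := ZMod.val_lt _
  have h1 : x - w = (x - v) - (w - v) := by ring
  have h2 : v - w = (0 : ZMod m) - (w - v) := by ring
  unfold StrictlyBtw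
  rw [h1, h2, sub_val_eq (x - v) (w - v), sub_val_eq 0 (w - v)]
  simp only [ZMod.val_zero]
  split <;> split <;> omega

lemma crosses_iff (v w c d : ZMod m) (hw : w ≠ v) :
    Crosses v w c d ↔
      (0 < (c - v).val ∧ (c - v).val < (w - v).val ∧ (w - v).val < (d - v).val) ∨
      (0 < (d - v).val ∧ (d - v).val < (w - v).val ∧ (w - v).val < (c - v).val) := by
  unfold Crosses
  rw [strictlyBtw_rev v w d hw, strictlyBtw_rev v w c hw]
  unfold StrictlyBtw
  tauto

lemma val_neg_one (hm : 1 < m) : (-1 : ZMod m).val = m - 1 := by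
  haveI : Fact (1 < m) := ⟨hm⟩
  have h : (-1 : ZMod m) = (0 : ZMod m) - 1 := by ring
  rw [h, sub_val_eq 0 1, ZMod.val_zero, ZMod.val_one m]
  simp

end FanAux

open FanAux in
/-- For `m ≥ 5` and a vertex `v`, the fan triangulation at `v` consists of the diagonals
`{v, w}` with `w ∉ {v, v - 1, v + 1}`. Then `{v - 1, v + 1}` is the unique diagonal of
the `m`-gon crossing every diagonal of the fan triangulation at `v`. -/
theorem unique_diagonal_crossing_fan {m : ℕ} (hm : 5 ≤ m) (v : ZMod m) :
    IsDiagonal (v - 1) (v + 1) ∧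
      ∀ c d : ZMod m, IsDiagonal c d →
        ((∀ w : ZMod m, w ≠ v → w ≠ v - 1 → w ≠ v + 1 → Crosses v w c d) ↔
          ({c, d} : Finset (ZMod m)) = {v - 1, v + 1}) := by
  haveI : NeZero m := ⟨by omega⟩
  have h1m : 1 < m := by omega
  haveI : Fact (1 < m) := ⟨h1m⟩
  have hv1 : ((v + 1) - v).val = 1 := by
    rw [show (v + 1) - v = 1 by ring, ZMod.val_one m]
  have hvm1 : ((v - 1) - v).val = m - 1 := by
    rw [show (v - 1) - v = -1 by ring, val_neg_one h1m]
  -- natCast nonzero helper usage inline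
  have hcast : ∀ t : ℕ, 0 < t → t < m → (t : ZMod m) ≠ 0 := by
    intro t h0 ht h
    have := ZMod.val_cast_of_lt ht
    rw [h, ZMod.val_zero] at this
    omega
  constructor
  · constructor
    · intro h
      have h2 : ((2 : ℕ) : ZMod m) = 0 := by push_cast; linear_combination - h
      exact hcast 2 (by omega) (by omega) h2
    · rintro (h | h)
      · have h3 : ((3 : ℕ) : ZMod m) = 0 := by push_cast; linear_combination - h
        exact hcast 3 (by omega) (by omega) h3
      · have h1 : ((1 : ℕ) : ZMod m) = 0 := by push_cast; linear_combination h
        exact hcast 1 (by omega) (by omega) h1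
  · intro c d hcd
    -- key facts about vertices v + k for 2 ≤ k ≤ m - 2
    have shift : ∀ k : ℕ, 2 ≤ k → k ≤ m - 2 →
        (v + (k : ℕ) ≠ v) ∧ (v + (k : ℕ) ≠ v - 1) ∧ (v + (k : ℕ) ≠ v + 1) ∧
          ((v + (k : ℕ) - v).val = k) := by
      intro k hk2 hkm
      have hval : (v + (k : ℕ) - v).val = k := by
        rw [show v + (k : ℕ) - v = (k : ZMod m) by ring, ZMod.val_natCast,
          Nat.mod_eq_of_lt (by omega)]
      refine ⟨?_, ?_, ?_, hval⟩
      · intro h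
        have : (v + (k : ℕ) - v).val = (v - v).val := by rw [h]
        rw [hval, show v - v = (0 : ZMod m) by ring, ZMod.val_zero] at this
        omega
      · intro h
        have : (v + (k : ℕ) - v).val = ((v - 1) - v).val := by rw [h]
        rw [hval, hvm1] at this
        omega
      · intro h
        have : (v + (k : ℕ) - v).val = ((v + 1) - v).val := by rw [h]
        rw [hval, hv1] at this
        omega
    constructor
    · -- forward direction
      intro hcross
      set p := (c - v).val with hp
      set q := (d - v).val with hq
      have hpm : p < m := ZMod.val_lt _
      have hqm : q < m := ZMod.val_lt _
      obtain ⟨hne2, hne2b, hne2c, hval2⟩ := shift 2 (by omega) (by omega)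
      obtain ⟨hnel, hnelb, hnelc, hvall⟩ := shift (m - 2) (by omega) (by omega)
      have hc2 := (crosses_iff v _ c d hne2).1 (hcross _ hne2 hne2b hne2c)
      have hcl := (crosses_iff v _ c d hnel).1 (hcross _ hnel hnelb hnelc)
      rw [hval2] at hc2
      rw [hvall] at hcl
      have key : (p = 1 ∧ q = m - 1) ∨ (q = 1 ∧ p = m - 1) := by omega
      have conv1 : ∀ x : ZMod m, (x - v).val = 1 → x = v + 1 := by
        intro x hx
        have : x - v = (v + 1) - v := val_inj.1 (by rw [hx, hv1])
        linear_combination this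
      have conv2 : ∀ x : ZMod m, (x - v).val = m - 1 → x = v - 1 := by
        intro x hx
        have : x - v = (v - 1) - v := val_inj.1 (by rw [hx, hvm1])
        linear_combination this
      rcases key with ⟨hp1, hq1⟩ | ⟨hq1, hp1⟩
      · rw [conv1 c hp1, conv2 d hq1]
        exact Finset.pair_comm _ _
      · rw [conv1 d hq1, conv2 c hp1]
    · -- backward direction
      intro hset w hw hwb hwc
      have hcmem : c ∈ ({v - 1, v + 1} : Finset (ZMod m)) := by
        rw [← hset]; simp
      have hdmem : d ∈ ({v - 1, v + 1} : Finset (ZMod m)) := by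
        rw [← hset]; simp
      simp only [Finset.mem_insert, Finset.mem_singleton] at hcmem hdmem
      have hk0 : 0 < (w - v).val := by
        simpa [ZMod.val_pos, sub_eq_zero] using hw
      have hkm : (w - v).val < m := ZMod.val_lt _
      have hk1 : (w - v).val ≠ 1 := by
        intro h
        apply hwc
        have : w - v = (v + 1) - v := val_inj.1 (by rw [h, hv1])
        linear_combination this
      have hkm1 : (w - v).val ≠ m - 1 := by
        intro h
        apply hwb
        have : w - v = (v - 1) - v := val_inj.1 (by rw [h, hvm1])
        linear_combination this
      rw [crosses_iff v w c d hw]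
      rcases hcmem with hc | hc <;> rcases hdmem with hd | hd
      · exact absurd (hc.trans hd.symm) hcd.1
      · rw [hc, hd, hv1, hvm1]; omega
      · rw [hc, hd, hv1, hvm1]; omega
      · exact absurd (hc.trans hd.symm) hcd.1
end

section
/- For all integers n ≥ 2 and 0 ≤ k ≤ n-1, the rational number (1/2)·( C(n,k+1)·C(n+k+1,k+1) + C(n-1,k+1)·C(n+k,k+1) ) is a nonnegative integer, namely C(n,k+1)·C(n+k,k+1). -/
open Nat

lemma key_j0 (k : ℕ) : (2*k+2).choose (k+1) = 2 * (2*k+1).choose (k+1) := by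
  have h : (2*k+1).choose ((2*k+1) - k) = (2*k+1).choose k := Nat.choose_symm (by omega)
  rw [show 2*k+1-k = k+1 by omega] at h
  have h2 : (2*k+2).choose (k+1) = (2*k+1).choose k + (2*k+1).choose (k+1) := by
    rw [show 2*k+2 = (2*k+1)+1 by ring]
    exact Nat.choose_succ_succ _ _
  omega

lemma key_succ (k i : ℕ) :
    (k+2+i).choose (k+1) * (2*k+3+i).choose (k+1) + (k+1+i).choose (k+1) * (2*k+2+i).choose (k+1)
    = 2 * ((k+2+i).choose (k+1) * (2*k+2+i).choose (k+1)) := by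
  have e1 : (k+2+i)! = (k+2+i) * (k+1+i)! := by
    rw [show k+2+i = (k+1+i)+1 by ring]; exact Nat.factorial_succ _
  have e2 : (2*k+3+i)! = (2*k+3+i) * (2*k+2+i)! := by
    rw [show 2*k+3+i = (2*k+2+i)+1 by ring]; exact Nat.factorial_succ _
  have e3 : (i+1)! = (i+1) * i ! := Nat.factorial_succ _
  have key : ((k+2+i).choose (k+1) * (2*k+3+i).choose (k+1)
      + (k+1+i).choose (k+1) * (2*k+2+i).choose (k+1) : ℚ)
      = 2 * ((k+2+i).choose (k+1) * (2*k+2+i).choose (k+1)) := by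
    rw [Nat.cast_choose ℚ (show k+1 ≤ k+2+i by omega),
        Nat.cast_choose ℚ (show k+1 ≤ 2*k+3+i by omega),
        Nat.cast_choose ℚ (show k+1 ≤ k+1+i by omega),
        Nat.cast_choose ℚ (show k+1 ≤ 2*k+2+i by omega)]
    rw [show k+2+i-(k+1) = i+1 by omega, show 2*k+3+i-(k+1) = k+2+i by omega,
        show k+1+i-(k+1) = i by omega, show 2*k+2+i-(k+1) = k+1+i by omega]
    rw [e1, e2, e3]
    have f1 : ((k+1)! : ℚ) ≠ 0 := by exact_mod_cast Nat.factorial_ne_zero _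
    have f2 : ((k+1+i)! : ℚ) ≠ 0 := by exact_mod_cast Nat.factorial_ne_zero _
    have f3 : ((2*k+2+i)! : ℚ) ≠ 0 := by exact_mod_cast Nat.factorial_ne_zero _
    have f4 : ((i)! : ℚ) ≠ 0 := by exact_mod_cast Nat.factorial_ne_zero _
    have f5 : ((k:ℚ)+2+i) ≠ 0 := by positivity
    have f6 : ((i:ℚ)+1) ≠ 0 := by positivity
    push_cast
    field_simp
    ring
  exact_mod_cast key

/-- For `n ≥ 2` and `0 ≤ k ≤ n - 1`, the rational number
`(1/2)·(C(n,k+1)·C(n+k+1,k+1) + C(n-1,k+1)·C(n+k,k+1))` is a nonnegative integer,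
namely the natural number `C(n,k+1)·C(n+k,k+1)`. -/
theorem positive_B_half_sum_integral (n k : ℕ) (hn : 2 ≤ n) (hk : k ≤ n - 1) :
    (1 / 2 : ℚ) * ((n.choose (k + 1) : ℚ) * ((n + k + 1).choose (k + 1) : ℚ) +
        ((n - 1).choose (k + 1) : ℚ) * ((n + k).choose (k + 1) : ℚ)) =
      ((n.choose (k + 1) * (n + k).choose (k + 1) : ℕ) : ℚ) := by
  have hnat : n.choose (k+1) * (n+k+1).choose (k+1) + (n-1).choose (k+1) * (n+k).choose (k+1)
      = 2 * (n.choose (k+1) * (n+k).choose (k+1)) := by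
    obtain ⟨j, rfl⟩ : ∃ j, n = k+1+j := ⟨n - (k+1), by omega⟩
    cases j with
    | zero =>
      simp only [Nat.add_zero]
      rw [show k+1-1 = k by omega, Nat.choose_succ_self, Nat.choose_self]
      rw [show k+1+k+1 = 2*k+2 by ring, show k+1+k = 2*k+1 by ring]
      simpa using key_j0 k
    | succ i =>
      have h := key_succ k i
      rw [show k+1+(i+1) = k+2+i by ring, show k+2+i-1 = k+1+i by omega,
          show k+2+i+k+1 = 2*k+3+i by ring, show k+2+i+k = 2*k+2+i by ring]
      exact h
  have hq : ((n.choose (k+1) * (n+k+1).choose (k+1) + (n-1).choose (k+1) * (n+k).choose (k+1) : ℕ) : ℚ)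
      = 2 * ((n.choose (k+1) * (n+k).choose (k+1) : ℕ) : ℚ) := by exact_mod_cast hnat
  push_cast at hq ⊢
  linarith
end
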